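/- Let X and Y be real Banach spaces. If the norm of the direct sum X ⊕₁ Y (product space with norm ‖(x,y)‖ = ‖x‖ + ‖y‖) is average non rough, then both the norm of X and the norm of Y are average non rough. -/

import Mathlib

open Metric NormedSpace ENNReal

section Defs

variable (Z : Type*) [NormedAddCommGroup Z] [NormedSpace ℝ Z]

/-- The w*-slice of the closed unit ball of the dual of `Z` determined by `z : Z` and `α > 0`:
`S(B_{Z*}, z, α) = {f ∈ B_{Z*} : f(z) > sup_{g ∈ B_{Z*}} g(z) − α}`. -/
def wStarSlice (z : Z) (α : ℝ) : Set (StrongDual ℝ Z) :=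
  {f | f ∈ closedBall (0 : StrongDual ℝ Z) 1 ∧
    f z > sSup ((fun g : StrongDual ℝ Z => g z) '' closedBall (0 : StrongDual ℝ Z) 1) - α}

/-- The norm of `Z` is `ε`-rough: every w*-slice of `B_{Z*}` has diameter at least `ε`. -/
def EpsRough (ε : ℝ) : Prop :=
  ∀ (z : Z) (α : ℝ), 0 < α → ε ≤ diam (wStarSlice Z z α)

/-- The norm of `Z` is non rough: it is not `ε`-rough for any `ε > 0`. -/
def NonRough : Prop := ∀ ε > 0, ¬ EpsRough Z ε

/-- `Z*` has the w*-Ball Dentable Property. -/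
def WStarBDP : Prop :=
  ∀ ε > 0, ∃ (z : Z) (α : ℝ), 0 < α ∧ diam (wStarSlice Z z α) < ε

/-- `V` is a (relatively) w*-open subset of the closed unit ball `B_{Z*}`. -/
def IsRelWStarOpen (V : Set (StrongDual ℝ Z)) : Prop :=
  ∃ U : Set (WeakDual ℝ Z), IsOpen U ∧
    V = {f | f ∈ closedBall (0 : StrongDual ℝ Z) 1 ∧ StrongDual.toWeakDual f ∈ U}

/-- The norm of `Z` is weakly `ε`-average rough: every nonempty relatively w*-open
subset of `B_{Z*}` has diameter at least `ε`. -/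
def WeaklyEpsAvgRough (ε : ℝ) : Prop :=
  ∀ V : Set (StrongDual ℝ Z), IsRelWStarOpen Z V → V.Nonempty → ε ≤ diam V

/-- The norm of `Z` is weakly average non rough. -/
def WeaklyAvgNonRough : Prop := ∀ ε > 0, ¬ WeaklyEpsAvgRough Z ε

/-- `Z*` has the w*-Ball Huskable Property. -/
def WStarBHP : Prop :=
  ∀ ε > 0, ∃ V : Set (StrongDual ℝ Z), IsRelWStarOpen Z V ∧ V.Nonempty ∧ diam V < ε

/-- `D` is a convex combination of w*-slices of `B_{Z*}`, i.e. `D = ∑ λᵢ Sᵢ` (Minkowski sum)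
with each `Sᵢ` a w*-slice, `λᵢ > 0`, `∑ λᵢ = 1`. -/
def IsConvexCombWStarSlices (D : Set (StrongDual ℝ Z)) : Prop :=
  ∃ (n : ℕ) (l : Fin n → ℝ) (z : Fin n → Z) (α : Fin n → ℝ),
    (∀ i, 0 < l i) ∧ (∑ i, l i) = 1 ∧ (∀ i, 0 < α i) ∧
    D = {f | ∃ g : Fin n → StrongDual ℝ Z,
      (∀ i, g i ∈ wStarSlice Z (z i) (α i)) ∧ f = ∑ i, l i • g i}

/-- The norm of `Z` is `ε`-average rough: every convex combination of w*-slices of `B_{Z*}`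
has diameter at least `ε`. -/
def EpsAvgRough (ε : ℝ) : Prop :=
  ∀ D : Set (StrongDual ℝ Z), IsConvexCombWStarSlices Z D → ε ≤ diam D

/-- The norm of `Z` is average non rough. -/
def AvgNonRough : Prop := ∀ ε > 0, ¬ EpsAvgRough Z ε

/-- `Z*` has the w*-Ball Small Combination of Slice Property. -/
def WStarBSCSP : Prop :=
  ∀ ε > 0, ∃ D : Set (StrongDual ℝ Z), IsConvexCombWStarSlices Z D ∧ diam D < ε

/-- A slice of the closed unit ball `B_Z` determined by `f ∈ Z*` and `α > 0`. -/
def ballSlice (f : StrongDual ℝ Z) (α : ℝ) : Set Z :=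
  {x | x ∈ closedBall (0 : Z) 1 ∧ f x > sSup (f '' closedBall (0 : Z) 1) - α}

/-- `Z` has the Ball Dentable Property. -/
def BDP : Prop :=
  ∀ ε > 0, ∃ (f : StrongDual ℝ Z) (α : ℝ), 0 < α ∧ diam (ballSlice Z f α) < ε

/-- `V` is a nonempty relatively weakly open subset of the closed unit ball `B_Z`. -/
def IsRelWeakOpen (V : Set Z) : Prop :=
  ∃ U : Set (WeakSpace ℝ Z), IsOpen U ∧
    V = {x | x ∈ closedBall (0 : Z) 1 ∧ toWeakSpace ℝ Z x ∈ U}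

/-- `Z` has the Ball Huskable Property. -/
def BHP : Prop :=
  ∀ ε > 0, ∃ V : Set Z, IsRelWeakOpen Z V ∧ V.Nonempty ∧ diam V < ε

/-- `D` is a convex combination of slices of `B_Z`. -/
def IsConvexCombSlices (D : Set Z) : Prop :=
  ∃ (n : ℕ) (l : Fin n → ℝ) (f : Fin n → StrongDual ℝ Z) (α : Fin n → ℝ),
    (∀ i, 0 < l i) ∧ (∑ i, l i) = 1 ∧ (∀ i, 0 < α i) ∧
    D = {x | ∃ g : Fin n → Z,
      (∀ i, g i ∈ ballSlice Z (f i) (α i)) ∧ x = ∑ i, l i • g i}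

/-- `Z` has the Ball Small Combination of Slice Property. -/
def BSCSP : Prop :=
  ∀ ε > 0, ∃ D : Set Z, IsConvexCombSlices Z D ∧ diam D < ε

variable {Z}

/-- The closed unit ball of a subspace `F` of the dual, viewed as a subset of the dual. -/
def subBall (F : Submodule ℝ (StrongDual ℝ Z)) : Set (StrongDual ℝ Z) :=
  {f | f ∈ F ∧ ‖f‖ ≤ 1}

/-- The w*-slice of `B_F` determined by `z : Z` and `α`. -/
def subWStarSlice (F : Submodule ℝ (StrongDual ℝ Z)) (z : Z) (α : ℝ) : Set (StrongDual ℝ Z) :=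
  {f | f ∈ subBall F ∧ f z > sSup ((fun g : StrongDual ℝ Z => g z) '' subBall F) - α}

/-- The subspace `F` of `Z*` has the w*-Ball Dentable Property. -/
def SubWStarBDP (F : Submodule ℝ (StrongDual ℝ Z)) : Prop :=
  ∀ ε > 0, ∃ (z : Z) (α : ℝ), 0 < α ∧ diam (subWStarSlice F z α) < ε

/-- `V` is a relatively w*-open subset of `B_F`. -/
def IsRelWStarOpenSub (F : Submodule ℝ (StrongDual ℝ Z)) (V : Set (StrongDual ℝ Z)) : Prop :=
  ∃ U : Set (WeakDual ℝ Z), IsOpen U ∧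
    V = {f | f ∈ subBall F ∧ StrongDual.toWeakDual f ∈ U}

/-- The subspace `F` of `Z*` has the w*-Ball Huskable Property. -/
def SubWStarBHP (F : Submodule ℝ (StrongDual ℝ Z)) : Prop :=
  ∀ ε > 0, ∃ V : Set (StrongDual ℝ Z), IsRelWStarOpenSub F V ∧ V.Nonempty ∧ diam V < ε

/-- `D` is a convex combination of w*-slices of `B_F`. -/
def IsConvexCombSubWStarSlices (F : Submodule ℝ (StrongDual ℝ Z)) (D : Set (StrongDual ℝ Z)) : Prop :=
  ∃ (n : ℕ) (l : Fin n → ℝ) (z : Fin n → Z) (α : Fin n → ℝ),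
    (∀ i, 0 < l i) ∧ (∑ i, l i) = 1 ∧ (∀ i, 0 < α i) ∧
    D = {f | ∃ g : Fin n → StrongDual ℝ Z,
      (∀ i, g i ∈ subWStarSlice F (z i) (α i)) ∧ f = ∑ i, l i • g i}

/-- The subspace `F` of `Z*` has the w*-Ball Small Combination of Slice Property. -/
def SubWStarBSCSP (F : Submodule ℝ (StrongDual ℝ Z)) : Prop :=
  ∀ ε > 0, ∃ D : Set (StrongDual ℝ Z), IsConvexCombSubWStarSlices F D ∧ diam D < ε

/-- The annihilator `Y^⊥ = {f ∈ Z* : f(y) = 0 for all y ∈ Y}` of a subspace `Y` of `Z`. -/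
noncomputable def annih (Y : Submodule ℝ Z) : Submodule ℝ (StrongDual ℝ Z) where
  carrier := {f | ∀ y ∈ Y, f y = 0}
  add_mem' := by intro f g hf hg y hy; simp [hf y hy, hg y hy]
  zero_mem' := by intro y hy; simp
  smul_mem' := by intro c f hf y hy; simp [hf y hy]

end Defs

section Aux

variable {X Z : Type*} [NormedAddCommGroup X] [NormedSpace ℝ X]
  [NormedAddCommGroup Z] [NormedSpace ℝ Z]

lemma sSup_dual_ball_eval (z : Z) :
    sSup ((fun g : StrongDual ℝ Z => g z) '' closedBall (0 : StrongDual ℝ Z) 1) = ‖z‖ := by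
  obtain ⟨g, hg1, hgz⟩ := exists_dual_vector'' ℝ z
  have hub : ∀ a ∈ ((fun g : StrongDual ℝ Z => g z) '' closedBall (0 : StrongDual ℝ Z) 1), a ≤ ‖z‖ := by
    rintro a ⟨f, hf, rfl⟩
    rw [mem_closedBall_zero_iff] at hf
    calc f z ≤ |f z| := le_abs_self _
      _ = ‖f z‖ := (Real.norm_eq_abs _).symm
      _ ≤ ‖f‖ * ‖z‖ := f.le_opNorm z
      _ ≤ 1 * ‖z‖ := mul_le_mul_of_nonneg_right hf (norm_nonneg z)
      _ = ‖z‖ := one_mul _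
  have hgz' : g z = ‖z‖ := by exact_mod_cast hgz
  refine le_antisymm (Real.sSup_le hub (norm_nonneg z)) ?_
  rw [← hgz']
  exact le_csSup ⟨‖z‖, hub⟩ ⟨g, mem_closedBall_zero_iff.mpr hg1, rfl⟩

lemma norm_comp_le_of_isometric (h : StrongDual ℝ Z) (ι : X →L[ℝ] Z) (hι : ∀ x, ‖ι x‖ = ‖x‖) :
    ‖h.comp ι‖ ≤ ‖h‖ := by
  refine ContinuousLinearMap.opNorm_le_bound _ (norm_nonneg h) fun x => ?_
  calc ‖h (ι x)‖ ≤ ‖h‖ * ‖ι x‖ := h.le_opNorm (ι x)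
    _ = ‖h‖ * ‖x‖ := by rw [hι x]

/-- Abstract transfer lemma: if `X` embeds isometrically into `Z` with a norm-one projection
back, and bounded functionals on `X` extend to bounded functionals on `Z` almost attaining the
complementary part of the norm, then average non-roughness passes from `Z` to `X`. -/
lemma avgNonRough_transfer (ι : X →L[ℝ] Z) (π : Z →L[ℝ] X)
    (hι : ∀ x, ‖ι x‖ = ‖x‖) (hπι : ∀ x, π (ι x) = x)
    (hext : ∀ (z : Z) (δ : ℝ), 0 < δ → ∃ f₂ : StrongDual ℝ Z,
      ‖z‖ - ‖π z‖ - δ < f₂ z ∧ ∀ f₁ : StrongDual ℝ X, ‖f₁‖ ≤ 1 → ‖f₁.comp π + f₂‖ ≤ 1)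
    (h : AvgNonRough Z) : AvgNonRough X := by
  intro ε hε hrough
  refine h ε hε (fun D hD => ?_)
  obtain ⟨n, l, z, α, hl, hlsum, hα, rfl⟩ := hD
  choose f₂ hf₂val hf₂norm using fun i => hext (z i) (α i / 2) (half_pos (hα i))
  set D' : Set (StrongDual ℝ X) := {f | ∃ g : Fin n → StrongDual ℝ X,
      (∀ i, g i ∈ wStarSlice X (π (z i)) (α i / 2)) ∧ f = ∑ i, l i • g i} with hD'def
  have hcomb : IsConvexCombWStarSlices X D' :=
    ⟨n, l, fun i => π (z i), fun i => α i / 2, hl, hlsum,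
      fun i => half_pos (hα i), rfl⟩
  set D : Set (StrongDual ℝ Z) := {f | ∃ g : Fin n → StrongDual ℝ Z,
      (∀ i, g i ∈ wStarSlice Z (z i) (α i)) ∧ f = ∑ i, l i • g i} with hDdef
  -- D is bounded
  have hDb : D ⊆ closedBall (0 : StrongDual ℝ Z) 1 := by
    rintro f ⟨g, hg, rfl⟩
    rw [mem_closedBall_zero_iff]
    calc ‖∑ i, l i • g i‖ ≤ ∑ i, ‖l i • g i‖ := norm_sum_le _ _
      _ ≤ ∑ i, l i := by
          refine Finset.sum_le_sum fun i _ => ?_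
          have h1 : ‖g i‖ ≤ 1 := mem_closedBall_zero_iff.mp (hg i).1
          rw [norm_smul, Real.norm_eq_abs, abs_of_pos (hl i)]
          calc l i * ‖g i‖ ≤ l i * 1 := by
                exact mul_le_mul_of_nonneg_left h1 (hl i).le
            _ = l i := mul_one _
      _ = 1 := hlsum
  have hDbdd : Bornology.IsBounded D :=
    (Metric.isBounded_closedBall).subset hDb
  -- the key diameter estimate
  have hdiam : diam D' ≤ diam D := by
    refine diam_le_of_forall_dist_le diam_nonneg ?_
    rintro a ⟨g, hg, rfl⟩ b ⟨g', hg', rfl⟩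
    -- lift each slice element
    have lift : ∀ (u : Fin n → StrongDual ℝ X), (∀ i, u i ∈ wStarSlice X (π (z i)) (α i / 2)) →
        ∀ i, (u i).comp π + f₂ i ∈ wStarSlice Z (z i) (α i) := by
      intro u hu i
      have hu1 : ‖u i‖ ≤ 1 := mem_closedBall_zero_iff.mp (hu i).1
      have hu2 := (hu i).2
      rw [sSup_dual_ball_eval] at hu2
      constructor
      · exact mem_closedBall_zero_iff.mpr (hf₂norm i (u i) hu1)
      · rw [sSup_dual_ball_eval]
        have := hf₂val i
        simp only [ContinuousLinearMap.add_apply, ContinuousLinearMap.comp_apply]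
        linarith
    have hA : (∑ i, l i • ((g i).comp π + f₂ i)) ∈ D := ⟨_, lift g hg, rfl⟩
    have hB : (∑ i, l i • ((g' i).comp π + f₂ i)) ∈ D := ⟨_, lift g' hg', rfl⟩
    have hAB : dist (∑ i, l i • ((g i).comp π + f₂ i)) (∑ i, l i • ((g' i).comp π + f₂ i))
        ≤ diam D := dist_le_diam_of_mem hDbdd hA hB
    refine le_trans ?_ hAB
    rw [dist_eq_norm, dist_eq_norm]
    have key : (∑ i, l i • g i) - (∑ i, l i • g' i) =
        ((∑ i, l i • ((g i).comp π + f₂ i)) - (∑ i, l i • ((g' i).comp π + f₂ i))).comp ι := by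
      ext x
      simp only [ContinuousLinearMap.coe_sub', Pi.sub_apply, ContinuousLinearMap.coe_sum',
        Finset.sum_apply, ContinuousLinearMap.coe_smul', Pi.smul_apply,
        ContinuousLinearMap.comp_apply, ContinuousLinearMap.add_apply, hπι, smul_eq_mul]
      rw [← Finset.sum_sub_distrib, ← Finset.sum_sub_distrib]
      exact Finset.sum_congr rfl fun i _ => by ring
    rw [key]
    exact norm_comp_le_of_isometric _ ι hι
  calc ε ≤ diam D' := hrough D' hcomb
    _ ≤ diam D := hdiam

end Aux

/-- If the norm of `X ⊕₁ Y` is average non rough, then both the norms of `X` and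
`Y` are average non rough. -/
theorem statement_10 (X Y : Type*) [NormedAddCommGroup X] [NormedSpace ℝ X] [CompleteSpace X]
    [NormedAddCommGroup Y] [NormedSpace ℝ Y] [CompleteSpace Y]
    (h : AvgNonRough (WithLp 1 (X × Y))) :
    AvgNonRough X ∧ AvgNonRough Y := by
  set e := WithLp.prodContinuousLinearEquiv 1 ℝ X Y with he
  have hnorm : ∀ z : WithLp 1 (X × Y), ‖z‖ = ‖z.fst‖ + ‖z.snd‖ := by
    intro z
    rw [WithLp.prod_norm_eq_add (by norm_num)]
    norm_num
  set ιX : X →L[ℝ] WithLp 1 (X × Y) :=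
    e.symm.toContinuousLinearMap.comp (ContinuousLinearMap.inl ℝ X Y) with hιX
  set ιY : Y →L[ℝ] WithLp 1 (X × Y) :=
    e.symm.toContinuousLinearMap.comp (ContinuousLinearMap.inr ℝ X Y) with hιY
  set πX : WithLp 1 (X × Y) →L[ℝ] X :=
    (ContinuousLinearMap.fst ℝ X Y).comp e.toContinuousLinearMap with hπX
  set πY : WithLp 1 (X × Y) →L[ℝ] Y :=
    (ContinuousLinearMap.snd ℝ X Y).comp e.toContinuousLinearMap with hπY
  have hιXfst : ∀ x : X, (ιX x).fst = x := fun x => rfl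
  have hιXsnd : ∀ x : X, (ιX x).snd = 0 := fun x => rfl
  have hιYfst : ∀ y : Y, (ιY y).fst = 0 := fun y => rfl
  have hιYsnd : ∀ y : Y, (ιY y).snd = y := fun y => rfl
  have hπXapp : ∀ z : WithLp 1 (X × Y), πX z = z.fst := fun z => rfl
  have hπYapp : ∀ z : WithLp 1 (X × Y), πY z = z.snd := fun z => rfl
  constructor
  · refine avgNonRough_transfer ιX πX ?_ ?_ ?_ h
    · intro x; rw [hnorm, hιXfst, hιXsnd, norm_zero, add_zero]
    · intro x; rw [hπXapp, hιXfst]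
    · intro z δ hδ
      obtain ⟨g, hg1, hgz⟩ := exists_dual_vector'' ℝ z.snd
      refine ⟨g.comp πY, ?_, ?_⟩
      · have : (g.comp πY) z = ‖z.snd‖ := by
          rw [ContinuousLinearMap.comp_apply, hπYapp, hgz]; simp
        rw [this, hnorm z, hπXapp]
        linarith
      · intro f₁ hf₁
        refine ContinuousLinearMap.opNorm_le_bound _ zero_le_one fun w => ?_
        simp only [ContinuousLinearMap.add_apply, ContinuousLinearMap.comp_apply,
          hπXapp, hπYapp, one_mul]
        calc ‖f₁ w.fst + g w.snd‖ ≤ ‖f₁ w.fst‖ + ‖g w.snd‖ := norm_add_le _ _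
          _ ≤ ‖f₁‖ * ‖w.fst‖ + ‖g‖ * ‖w.snd‖ :=
              add_le_add (f₁.le_opNorm _) (g.le_opNorm _)
          _ ≤ 1 * ‖w.fst‖ + 1 * ‖w.snd‖ :=
              add_le_add (mul_le_mul_of_nonneg_right hf₁ (norm_nonneg _))
                (mul_le_mul_of_nonneg_right hg1 (norm_nonneg _))
          _ = ‖w‖ := by rw [one_mul, one_mul, hnorm w]
  · refine avgNonRough_transfer ιY πY ?_ ?_ ?_ h
    · intro y; rw [hnorm, hιYfst, hιYsnd, norm_zero, zero_add]
    · intro y; rw [hπYapp, hιYsnd]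
    · intro z δ hδ
      obtain ⟨g, hg1, hgz⟩ := exists_dual_vector'' ℝ z.fst
      refine ⟨g.comp πX, ?_, ?_⟩
      · have : (g.comp πX) z = ‖z.fst‖ := by
          rw [ContinuousLinearMap.comp_apply, hπXapp, hgz]; simp
        rw [this, hnorm z, hπYapp]
        linarith
      · intro f₁ hf₁
        refine ContinuousLinearMap.opNorm_le_bound _ zero_le_one fun w => ?_
        simp only [ContinuousLinearMap.add_apply, ContinuousLinearMap.comp_apply,
          hπXapp, hπYapp, one_mul]
        calc ‖f₁ w.snd + g w.fst‖ ≤ ‖f₁ w.snd‖ + ‖g w.fst‖ := norm_add_le _ _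
          _ ≤ ‖f₁‖ * ‖w.snd‖ + ‖g‖ * ‖w.fst‖ :=
              add_le_add (f₁.le_opNorm _) (g.le_opNorm _)
          _ ≤ 1 * ‖w.snd‖ + 1 * ‖w.fst‖ :=
              add_le_add (mul_le_mul_of_nonneg_right hf₁ (norm_nonneg _))
                (mul_le_mul_of_nonneg_right hg1 (norm_nonneg _))
          _ = ‖w‖ := by rw [one_mul, one_mul, hnorm w]; ring
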